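/- arXiv:2209.11113 — 3 statements merged into one kernel-verified Lean document; each statement's English description precedes it below -/
import Mathlib

section
/- Let η_w > 0, T ≥ 1, and let Λ_i(t) be a family of nonempty finite index sets satisfying Λ_i(t) ⊆ Λ_i(t-1) for all t (Assumption 1), with degree d_i(t) = |Λ_i(t)|. Suppose each index j carries cumulative losses \bar{L}_{t,j} = Σ_{s=1}^t \bar{l}_{s,j} with \bar{l}_{s,j} ∈ [0,1], the social prediction is \hat{f}_{t,i} = Σ_{j ∈ Λ_i(t-1)} w_{ij}(t-1) \bar{f}_{t,j} with w_{ij}(t) = exp(-η_w \bar{L}_{t,j}) / Σ_{j' ∈ Λ_i(t)} exp(-η_w \bar{L}_{t,j'}), and the loss l is convex in its first argument with values in [0,1]. Then \hat{L}_{T,i} - min_{j ∈ Λ_i(T)} \bar{L}_{T,j} ≤ η_w T/8 + (log d_i(0))/η_w. -/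
lemma hoeffding_log_bound (p h : ℝ) (hp0 : 0 ≤ p) (hp1 : p ≤ 1) :
    Real.log (1 - p + p * Real.exp h) ≤ p * h + h ^ 2 / 8 := by
  have hD : ∀ x : ℝ, 0 < 1 - p + p * Real.exp x := by
    intro x
    rcases lt_or_eq_of_le hp1 with h1 | h1
    · have := mul_nonneg hp0 (Real.exp_pos x).le; linarith
    · subst h1; simpa using Real.exp_pos x
  set F : ℝ → ℝ := fun x => p * x + x ^ 2 / 8 - Real.log (1 - p + p * Real.exp x) with hFdef
  set G : ℝ → ℝ := fun x => p + x / 4 - p * Real.exp x / (1 - p + p * Real.exp x) with hGdef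
  have hDd : ∀ x : ℝ, HasDerivAt (fun x => 1 - p + p * Real.exp x) (p * Real.exp x) x := by
    intro x
    simpa using ((Real.hasDerivAt_exp x).const_mul p).const_add (1 - p)
  have hF' : ∀ x, HasDerivAt F (G x) x := by
    intro x
    have h2 : HasDerivAt (fun x => Real.log (1 - p + p * Real.exp x))
        (p * Real.exp x / (1 - p + p * Real.exp x)) x := (hDd x).log (hD x).ne'
    have h3 : HasDerivAt (fun x : ℝ => p * x + x ^ 2 / 8) (p + x / 4) x := by
      have := ((hasDerivAt_id x).const_mul p).add ((hasDerivAt_pow 2 x).div_const 8)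
      exact this.congr_deriv (by norm_num; ring)
    exact h3.sub h2
  have hG' : ∀ x, HasDerivAt G
      (1 / 4 - (p * Real.exp x * (1 - p + p * Real.exp x) - p * Real.exp x * (p * Real.exp x))
        / (1 - p + p * Real.exp x) ^ 2) x := by
    intro x
    have hq : HasDerivAt (fun x => p * Real.exp x / (1 - p + p * Real.exp x))
        ((p * Real.exp x * (1 - p + p * Real.exp x) - p * Real.exp x * (p * Real.exp x))
          / (1 - p + p * Real.exp x) ^ 2) x :=
      ((Real.hasDerivAt_exp x).const_mul p).div (hDd x) (hD x).ne'
    have hlin : HasDerivAt (fun x : ℝ => p + x / 4) (1 / 4) x := by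
      simpa using ((hasDerivAt_id x).div_const 4).const_add p
    exact hlin.sub hq
  have hGmono : Monotone G := by
    apply monotone_of_deriv_nonneg (fun x => (hG' x).differentiableAt)
    intro x
    rw [(hG' x).deriv]
    set E := p * Real.exp x with hE
    set D := 1 - p + E with hDdef
    have hDpos : 0 < D := hD x
    have : (E * D - E * E) / D ^ 2 ≤ 1 / 4 := by
      rw [div_le_iff₀ (by positivity)]
      nlinarith [sq_nonneg (D - 2 * E)]
    linarith
  have hG0 : G 0 = 0 := by
    have : (1 : ℝ) - p + p * Real.exp 0 = 1 := by simp
    simp [hGdef, this]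
  have hFcont : Continuous F := by
    have : Differentiable ℝ F := fun x => (hF' x).differentiableAt
    exact this.continuous
  have hF0 : F 0 = 0 := by
    have : (1 : ℝ) - p + p * Real.exp 0 = 1 := by simp
    simp [hFdef, this]
  have key : 0 ≤ F h := by
    rcases le_total h 0 with hh | hh
    · have hanti : AntitoneOn F (Set.Iic 0) := by
        apply antitoneOn_of_deriv_nonpos (convex_Iic 0) hFcont.continuousOn
          (fun x _ => (hF' x).differentiableAt.differentiableWithinAt)
        intro x hx
        rw [(hF' x).deriv]
        have : G x ≤ G 0 := hGmono (le_of_lt (by simpa using hx))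
        linarith [hG0 ▸ this]
      have := hanti (Set.mem_Iic.2 hh) (Set.mem_Iic.2 le_rfl) hh
      linarith [hF0 ▸ this]
    · have hmono : MonotoneOn F (Set.Ici 0) := by
        apply monotoneOn_of_deriv_nonneg (convex_Ici 0) hFcont.continuousOn
          (fun x _ => (hF' x).differentiableAt.differentiableWithinAt)
        intro x hx
        rw [(hF' x).deriv]
        have : G 0 ≤ G x := hGmono (le_of_lt (by simpa using hx))
        linarith [hG0 ▸ this]
      have := hmono (Set.mem_Ici.2 le_rfl) (Set.mem_Ici.2 hh) hh
      linarith [hF0 ▸ this]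
  simp only [hFdef] at key
  linarith

lemma exp_interp (x a : ℝ) (h0 : 0 ≤ x) (h1 : x ≤ 1) :
    Real.exp (x * a) ≤ 1 - x + x * Real.exp a := by
  have h := convexOn_exp.2 (Set.mem_univ a) (Set.mem_univ (0:ℝ)) h0
    (by linarith : (0:ℝ) ≤ 1 - x) (by ring)
  simp only [smul_eq_mul, mul_zero, add_zero, Real.exp_zero, mul_one] at h
  linarith



/-- Lemma 2 of D2EAL: social prediction regret bound under
the shrinking-neighborhood assumption. -/
theorem d2eal_social_regret
    {n : ℕ} {Y : Type*}
    (A : Set (EuclideanSpace ℝ (Fin n))) (hA : Convex ℝ A)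
    (l : EuclideanSpace ℝ (Fin n) → Y → ℝ)
    (hl01 : ∀ x ∈ A, ∀ y : Y, l x y ∈ Set.Icc (0:ℝ) 1)
    (hconv : ∀ y : Y, ConvexOn ℝ A (fun x => l x y))
    (ηw : ℝ) (hη : 0 < ηw) (T : ℕ) (hT : 1 ≤ T)
    -- neighbour index sets (Assumption 1: shrinking neighborhoods)
    (Λ : ℕ → Finset ℕ) (hΛne : ∀ t, (Λ t).Nonempty)
    (hΛshrink : ∀ t, Λ (t+1) ⊆ Λ t)
    -- individual predictions of the agents and the target sequence
    (barf : ℕ → ℕ → EuclideanSpace ℝ (Fin n)) (y : ℕ → Y)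
    (hbarfA : ∀ t j, barf t j ∈ A)
    -- cumulative individual losses
    (barL : ℕ → ℕ → ℝ)
    (hbarL : ∀ t j, barL t j = ∑ s ∈ Finset.range t, l (barf (s+1) j) (y (s+1)))
    -- normalized exponential weights
    (w : ℕ → ℕ → ℝ)
    (hw : ∀ t j, w t j =
      Real.exp (-ηw * barL t j) / ∑ j' ∈ Λ t, Real.exp (-ηw * barL t j'))
    -- social prediction
    (fhat : ℕ → EuclideanSpace ℝ (Fin n))
    (hfhat : ∀ t, fhat (t+1) = ∑ j ∈ Λ t, w t j • barf (t+1) j)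
    -- social prediction cumulative loss
    (hatL : ℕ → ℝ)
    (hhatL : ∀ t, hatL t = ∑ s ∈ Finset.range t, l (fhat (s+1)) (y (s+1))) :
    hatL T - (Λ T).inf' (hΛne T) (fun j => barL T j)
      ≤ ηw * T / 8 + Real.log ((Λ 0).card) / ηw := by
  classical
  set Z : ℕ → ℝ := fun t => ∑ j ∈ Λ t, Real.exp (-ηw * barL t j) with hZdef
  have hZpos : ∀ t, 0 < Z t :=
    fun t => Finset.sum_pos (fun j _ => Real.exp_pos _) (hΛne t)
  -- weights sum to 1, are nonnegative
  have hwnn : ∀ t j, 0 ≤ w t j := by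
    intro t j; rw [hw]; positivity
  have hwsum : ∀ t, ∑ j ∈ Λ t, w t j = 1 := by
    intro t
    simp only [hw]
    rw [← Finset.sum_div]
    exact div_self (hZpos t).ne'
  -- losses are in [0,1]
  have hl0 : ∀ t j, 0 ≤ l (barf t j) (y t) := fun t j => (hl01 _ (hbarfA t j) _).1
  have hl1 : ∀ t j, l (barf t j) (y t) ≤ 1 := fun t j => (hl01 _ (hbarfA t j) _).2
  -- per-step potential bound
  have step : ∀ t, Real.log (Z (t+1)) ≤
      Real.log (Z t) - ηw * l (fhat (t+1)) (y (t+1)) + ηw ^ 2 / 8 := by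
    intro t
    set ℓ : ℕ → ℝ := fun j => l (barf (t+1) j) (y (t+1)) with hℓ
    have hLsucc : ∀ j, barL (t+1) j = barL t j + ℓ j := by
      intro j; rw [hbarL, hbarL, Finset.sum_range_succ]
    set P : ℝ := ∑ j ∈ Λ t, w t j * ℓ j with hP
    have hP0 : 0 ≤ P := Finset.sum_nonneg fun j _ => mul_nonneg (hwnn t j) (hl0 _ j)
    have hP1 : P ≤ 1 := by
      calc P ≤ ∑ j ∈ Λ t, w t j * 1 :=
            Finset.sum_le_sum fun j _ => mul_le_mul_of_nonneg_left (hl1 _ j) (hwnn t j)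
        _ = 1 := by simpa using hwsum t
    -- pointwise convexity bound on exp
    have hptwise : ∀ j, Real.exp (-ηw * ℓ j) ≤ (1 - ℓ j) + ℓ j * Real.exp (-ηw) := by
      intro j
      have h := exp_interp (ℓ j) (-ηw) (hl0 (t+1) j) (hl1 (t+1) j)
      calc Real.exp (-ηw * ℓ j) = Real.exp (ℓ j * -ηw) := by ring_nf
        _ ≤ 1 - ℓ j + ℓ j * Real.exp (-ηw) := h
    -- Z(t+1) ≤ Z t * (1 - P + P exp(-ηw))
    have hZbound : Z (t+1) ≤ Z t * (1 - P + P * Real.exp (-ηw)) := by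
      have h1 : Z (t+1) ≤ ∑ j ∈ Λ t, Real.exp (-ηw * barL (t+1) j) :=
        Finset.sum_le_sum_of_subset_of_nonneg (hΛshrink t)
          (fun j _ _ => (Real.exp_pos _).le)
      have h2 : ∑ j ∈ Λ t, Real.exp (-ηw * barL (t+1) j)
          ≤ ∑ j ∈ Λ t, Real.exp (-ηw * barL t j) * ((1 - ℓ j) + ℓ j * Real.exp (-ηw)) := by
        apply Finset.sum_le_sum
        intro j _
        rw [hLsucc j, show -ηw * (barL t j + ℓ j) = -ηw * barL t j + -ηw * ℓ j by ring,
          Real.exp_add]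
        exact mul_le_mul_of_nonneg_left (hptwise j) (Real.exp_pos _).le
      have h3 : ∑ j ∈ Λ t, Real.exp (-ηw * barL t j) * ((1 - ℓ j) + ℓ j * Real.exp (-ηw))
          = Z t * (1 - P + P * Real.exp (-ηw)) := by
        have hZt : Z t = ∑ j ∈ Λ t, Real.exp (-ηw * barL t j) := rfl
        have hwe : ∀ j, w t j * Z t = Real.exp (-ηw * barL t j) := by
          intro j; rw [hw]; exact div_mul_cancel₀ _ (hZpos t).ne'
        have hPZ : P * Z t = ∑ j ∈ Λ t, Real.exp (-ηw * barL t j) * ℓ j := by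
          rw [hP, Finset.sum_mul]
          exact Finset.sum_congr rfl fun j _ => by rw [← hwe j]; ring
        calc ∑ j ∈ Λ t, Real.exp (-ηw * barL t j) * ((1 - ℓ j) + ℓ j * Real.exp (-ηw))
            = ∑ j ∈ Λ t, (Real.exp (-ηw * barL t j) - Real.exp (-ηw * barL t j) * ℓ j
                + Real.exp (-ηw * barL t j) * ℓ j * Real.exp (-ηw)) :=
              Finset.sum_congr rfl fun j _ => by ring
          _ = (∑ j ∈ Λ t, Real.exp (-ηw * barL t j))
                - (∑ j ∈ Λ t, Real.exp (-ηw * barL t j) * ℓ j)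
                + (∑ j ∈ Λ t, Real.exp (-ηw * barL t j) * ℓ j) * Real.exp (-ηw) := by
              rw [Finset.sum_add_distrib, Finset.sum_sub_distrib, ← Finset.sum_mul]
          _ = Z t - P * Z t + P * Z t * Real.exp (-ηw) := by rw [← hPZ, ← hZt]
          _ = Z t * (1 - P + P * Real.exp (-ηw)) := by ring
      linarith
    -- take logs and apply Hoeffding
    have hDpos : 0 < 1 - P + P * Real.exp (-ηw) := by
      rcases le_or_gt (Real.exp (-ηw)) 1 with hE | hE
      · nlinarith [Real.exp_pos (-ηw),
          mul_nonneg (by linarith : (0:ℝ) ≤ 1 - P) (by linarith : (0:ℝ) ≤ 1 - Real.exp (-ηw))]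
      · nlinarith [mul_le_mul_of_nonneg_left hE.le hP0]
    have hlog : Real.log (Z (t+1)) ≤ Real.log (Z t) + Real.log (1 - P + P * Real.exp (-ηw)) := by
      calc Real.log (Z (t+1)) ≤ Real.log (Z t * (1 - P + P * Real.exp (-ηw))) :=
            Real.log_le_log (hZpos (t+1)) hZbound
        _ = _ := Real.log_mul (hZpos t).ne' hDpos.ne' 
    have hhoef := hoeffding_log_bound P (-ηw) hP0 hP1
    -- Jensen: convexity of l in the first argument
    have hjensen : l (fhat (t+1)) (y (t+1)) ≤ P := by
      rw [hfhat t, hP]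
      exact (hconv (y (t+1))).map_sum_le (fun j _ => hwnn t j) (hwsum t)
        (fun j _ => hbarfA (t+1) j)
    have : P * -ηw ≤ -ηw * l (fhat (t+1)) (y (t+1)) := by nlinarith
    calc Real.log (Z (t+1)) ≤ Real.log (Z t) + (P * -ηw + (-ηw) ^ 2 / 8) := by linarith
      _ ≤ Real.log (Z t) - ηw * l (fhat (t+1)) (y (t+1)) + ηw ^ 2 / 8 := by
          have : (-ηw) ^ 2 = ηw ^ 2 := by ring
          linarith
  -- telescope
  have tele : ∀ t : ℕ, Real.log (Z t) ≤
      Real.log (Z 0) - ηw * hatL t + t * ηw ^ 2 / 8 := by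
    intro t
    induction t with
    | zero => simp [hhatL]
    | succ t ih =>
        have h1 : hatL (t+1) = hatL t + l (fhat (t+1)) (y (t+1)) := by
          rw [hhatL, hhatL, Finset.sum_range_succ]
        have := step t
        push_cast
        rw [h1]
        push_cast at ih
        linarith
  -- initial potential
  have hZ0 : Real.log (Z 0) = Real.log ((Λ 0).card) := by
    have : Z 0 = (Λ 0).card := by
      simp only [hZdef]
      have : ∀ j, barL 0 j = 0 := fun j => by simp [hbarL]
      simp [this]
    rw [this]
  -- lower bound on final potential
  obtain ⟨j0, hj0, hj0e⟩ := Finset.exists_mem_eq_inf' (hΛne T) (fun j => barL T j)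
  have hlow : -ηw * (Λ T).inf' (hΛne T) (fun j => barL T j) ≤ Real.log (Z T) := by
    rw [hj0e]
    calc -ηw * barL T j0 = Real.log (Real.exp (-ηw * barL T j0)) := (Real.log_exp _).symm
      _ ≤ Real.log (Z T) := Real.log_le_log (Real.exp_pos _)
          (Finset.single_le_sum (fun j _ => (Real.exp_pos (-ηw * barL T j)).le) hj0)
  -- combine
  set m := (Λ T).inf' (hΛne T) (fun j => barL T j)
  have hcomb : ηw * (hatL T - m) ≤ Real.log ((Λ 0).card) + (T : ℝ) * ηw ^ 2 / 8 := by
    have := tele T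
    rw [hZ0] at this
    nlinarith
  have := (le_div_iff₀ hη).2 (by linarith [hcomb] : (hatL T - m) * ηw ≤
    Real.log ((Λ 0).card) + (T : ℝ) * ηw ^ 2 / 8)
  calc hatL T - m ≤ (Real.log ((Λ 0).card) + (T : ℝ) * ηw ^ 2 / 8) / ηw := this
    _ = ηw * T / 8 + Real.log ((Λ 0).card) / ηw := by field_simp; ring
end

section
/- Under Assumptions 1, 2, and 3, the D2EAL social prediction regret with respect to the best expert satisfies \hat{L}_{T,i} - L_{T,i*} ≤ η_w T/8 + (log d_i(0))/η_w + η_α T/8 + (log 2)/η_α + L1·Δ_o, for every agent i. -/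
section D2EALAux

lemma d2eal_bern_pos (m : ℝ) (hm0 : 0 ≤ m) (hm1 : m ≤ 1) (x : ℝ) :
    0 < 1 - m + m * Real.exp x := by
  rcases eq_or_lt_of_le hm0 with h | h
  · simp [← h]
  · nlinarith [Real.exp_pos x, mul_pos h (Real.exp_pos x)]

lemma d2eal_key_hoeffding (m : ℝ) (hm0 : 0 ≤ m) (hm1 : m ≤ 1) (s : ℝ) :
    Real.log (1 - m + m * Real.exp s) ≤ s * m + s ^ 2 / 8 := by
  set D : ℝ → ℝ := fun x => 1 - m + m * Real.exp x with hD
  have hDpos : ∀ x, 0 < D x := fun x => d2eal_bern_pos m hm0 hm1 x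
  set g : ℝ → ℝ := fun x => x * m + x ^ 2 / 8 - Real.log (D x) with hgdef
  set g1 : ℝ → ℝ := fun x => m + x / 4 - m * Real.exp x / D x with hg1def
  have hDderiv : ∀ x, HasDerivAt D (m * Real.exp x) x := by
    intro x
    exact ((Real.hasDerivAt_exp x).const_mul m).const_add (1 - m)
  have hg : ∀ x, HasDerivAt g (g1 x) x := by
    intro x
    have h1 : HasDerivAt (fun x : ℝ => x * m + x ^ 2 / 8 - Real.log (D x))
        (1 * m + (2 * x ^ 1) / 8 - m * Real.exp x / D x) x := by
      exact (((hasDerivAt_id x).mul_const m).add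
        ((hasDerivAt_pow 2 x).div_const 8)).sub
        ((hDderiv x).log (hDpos x).ne')
    convert h1 using 1
    simp [hg1def]; ring
  have hg1 : ∀ x, HasDerivAt g1 (1 / 4 - m * Real.exp x * (1 - m) / (D x) ^ 2) x := by
    intro x
    have hq : HasDerivAt (fun x => m * Real.exp x / D x)
        ((m * Real.exp x * D x - m * Real.exp x * (m * Real.exp x)) / (D x) ^ 2) x :=
      ((Real.hasDerivAt_exp x).const_mul m).div (hDderiv x) (hDpos x).ne'
    have h1 : HasDerivAt g1
        (0 + 1 / 4 - (m * Real.exp x * D x - m * Real.exp x * (m * Real.exp x)) / (D x) ^ 2) x :=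
      ((hasDerivAt_const x m).add ((hasDerivAt_id x).div_const 4)).sub hq
    convert h1 using 1
    have : D x ≠ 0 := (hDpos x).ne'
    field_simp [hD]
    ring
  have hg1nonneg : ∀ x, 0 ≤ 1 / 4 - m * Real.exp x * (1 - m) / (D x) ^ 2 := by
    intro x
    rw [sub_nonneg, div_le_iff₀ (pow_pos (hDpos x) 2)]
    have : D x = 1 - m + m * Real.exp x := rfl
    nlinarith [sq_nonneg (1 - m - m * Real.exp x), Real.exp_pos x]
  have hg1mono : Monotone g1 := by
    apply monotone_of_deriv_nonneg (fun x => (hg1 x).differentiableAt)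
    intro x
    rw [(hg1 x).deriv]
    exact hg1nonneg x
  have hg10 : g1 0 = 0 := by
    simp [hg1def, hD, Real.exp_zero]
  have hgdiff : Differentiable ℝ g := fun x => (hg x).differentiableAt
  have hg0 : g 0 = 0 := by
    simp [hgdef, hD, Real.exp_zero]
  have hfinal : 0 ≤ g s := by
    rcases le_total 0 s with hs | hs
    · have hmono : MonotoneOn g (Set.Ici 0) := by
        apply monotoneOn_of_deriv_nonneg (convex_Ici 0) hgdiff.continuous.continuousOn
          (hgdiff.differentiableOn)
        intro x hx
        rw [(hg x).deriv]
        rw [interior_Ici] at hx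
        have := hg1mono (le_of_lt hx)
        rw [hg10] at this
        linarith
      have := hmono Set.self_mem_Ici hs hs
      rw [hg0] at this; exact this
    · have hanti : AntitoneOn g (Set.Iic 0) := by
        apply antitoneOn_of_deriv_nonpos (convex_Iic 0) hgdiff.continuous.continuousOn
          (hgdiff.differentiableOn)
        intro x hx
        rw [(hg x).deriv]
        rw [interior_Iic] at hx
        have := hg1mono (le_of_lt hx)
        rw [hg10] at this
        linarith
      have := hanti hs Set.self_mem_Iic hs
      rw [hg0] at this; exact this
  have : Real.log (D s) ≤ s * m + s ^ 2 / 8 := by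
    simp only [hgdef] at hfinal
    linarith
  exact this

lemma d2eal_hoeffding_finset {ι : Type*} (S : Finset ι) (p ℓ : ι → ℝ) (s : ℝ)
    (hp0 : ∀ j ∈ S, 0 ≤ p j) (hp1 : ∑ j ∈ S, p j = 1)
    (hℓ : ∀ j ∈ S, ℓ j ∈ Set.Icc (0:ℝ) 1) :
    Real.log (∑ j ∈ S, p j * Real.exp (s * ℓ j))
      ≤ s * (∑ j ∈ S, p j * ℓ j) + s ^ 2 / 8 := by
  obtain ⟨j0, hj0, hpj0⟩ : ∃ j ∈ S, 0 < p j := by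
    have : ∑ j ∈ S, (0:ℝ) < ∑ j ∈ S, p j := by rw [hp1]; simp
    obtain ⟨j, hj, h⟩ := Finset.exists_lt_of_sum_lt this
    exact ⟨j, hj, h⟩
  have hpos : 0 < ∑ j ∈ S, p j * Real.exp (s * ℓ j) := by
    apply Finset.sum_pos'
    · exact fun j hj => mul_nonneg (hp0 j hj) (Real.exp_pos _).le
    · exact ⟨j0, hj0, mul_pos hpj0 (Real.exp_pos _)⟩
  have hm0 : 0 ≤ ∑ j ∈ S, p j * ℓ j :=
    Finset.sum_nonneg fun j hj => mul_nonneg (hp0 j hj) (hℓ j hj).1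
  have hm1 : (∑ j ∈ S, p j * ℓ j) ≤ 1 := by
    calc (∑ j ∈ S, p j * ℓ j) ≤ ∑ j ∈ S, p j := Finset.sum_le_sum fun j hj => by
            nlinarith [(hℓ j hj).2, hp0 j hj]
    _ = 1 := hp1
  have hpt : ∀ j ∈ S, p j * Real.exp (s * ℓ j)
      ≤ p j * ((1 - ℓ j) + ℓ j * Real.exp s) := by
    intro j hj
    apply mul_le_mul_of_nonneg_left _ (hp0 j hj)
    have ha : (0:ℝ) ≤ 1 - ℓ j := by linarith [(hℓ j hj).2]
    have hb : (0:ℝ) ≤ ℓ j := (hℓ j hj).1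
    have hab : (1 - ℓ j) + ℓ j = 1 := by ring
    have h := convexOn_exp.2 (Set.mem_univ (0:ℝ)) (Set.mem_univ s) ha hb hab
    rw [smul_eq_mul, smul_eq_mul, smul_eq_mul, Real.exp_zero, mul_zero, zero_add,
      mul_one] at h
    rw [mul_comm]
    exact h
  have hstep : (∑ j ∈ S, p j * Real.exp (s * ℓ j))
      ≤ 1 - (∑ j ∈ S, p j * ℓ j) + (∑ j ∈ S, p j * ℓ j) * Real.exp s := by
    calc (∑ j ∈ S, p j * Real.exp (s * ℓ j))
        ≤ ∑ j ∈ S, p j * ((1 - ℓ j) + ℓ j * Real.exp s) := Finset.sum_le_sum hpt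
      _ = ∑ j ∈ S, (p j - p j * ℓ j + (p j * ℓ j) * Real.exp s) := by
          apply Finset.sum_congr rfl; intro j hj; ring
      _ = (∑ j ∈ S, p j) - (∑ j ∈ S, p j * ℓ j)
            + (∑ j ∈ S, p j * ℓ j) * Real.exp s := by
          rw [Finset.sum_add_distrib, Finset.sum_sub_distrib, Finset.sum_mul]
      _ = 1 - (∑ j ∈ S, p j * ℓ j) + (∑ j ∈ S, p j * ℓ j) * Real.exp s := by
          rw [hp1]
  calc Real.log (∑ j ∈ S, p j * Real.exp (s * ℓ j))
      ≤ Real.log (1 - (∑ j ∈ S, p j * ℓ j) + (∑ j ∈ S, p j * ℓ j) * Real.exp s) :=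
        Real.log_le_log hpos hstep
    _ ≤ s * (∑ j ∈ S, p j * ℓ j) + s ^ 2 / 8 := d2eal_key_hoeffding _ hm0 hm1 s

lemma d2eal_ew_regret {ι : Type*} (Λ : ℕ → Finset ι) (hsh : ∀ t, Λ (t+1) ⊆ Λ t)
    (η : ℝ) (hη : 0 < η) (ℓ : ℕ → ι → ℝ)
    (hℓ : ∀ t j, j ∈ Λ t → ℓ t j ∈ Set.Icc (0:ℝ) 1)
    (h : ℕ → ℝ)
    (hh : ∀ t, h t ≤ ∑ j ∈ Λ t,
      (Real.exp (-η * ∑ s ∈ Finset.range t, ℓ s j)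
        / ∑ j' ∈ Λ t, Real.exp (-η * ∑ s ∈ Finset.range t, ℓ s j')) * ℓ t j)
    (T : ℕ) (jstar : ι) (hjstar : jstar ∈ Λ T) :
    ∑ t ∈ Finset.range T, h t
      ≤ (∑ s ∈ Finset.range T, ℓ s jstar) + η * T / 8
        + Real.log ((Λ 0).card) / η := by
  set Lc : ℕ → ι → ℝ := fun t j => ∑ s ∈ Finset.range t, ℓ s j with hLc
  set Z : ℕ → ℝ := fun t => ∑ j ∈ Λ t, Real.exp (-η * Lc t j) with hZ
  have hanti : Antitone Λ := antitone_nat_of_succ_le hsh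
  have hmem : ∀ t ≤ T, jstar ∈ Λ t := fun t ht => hanti ht hjstar
  have hZpos : ∀ t ≤ T, 0 < Z t := by
    intro t ht
    apply Finset.sum_pos'
    · exact fun j _ => (Real.exp_pos _).le
    · exact ⟨jstar, hmem t ht, Real.exp_pos _⟩
  have hstep : ∀ t < T, h t ≤ η / 8 + (Real.log (Z t) - Real.log (Z (t+1))) / η := by
    intro t ht
    have htT : t ≤ T := ht.le
    have htT1 : t + 1 ≤ T := ht
    set p : ι → ℝ := fun j => Real.exp (-η * Lc t j) / Z t with hp
    have hp0 : ∀ j ∈ Λ t, 0 ≤ p j := fun j _ =>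
      div_nonneg (Real.exp_pos _).le (hZpos t htT).le
    have hp1 : ∑ j ∈ Λ t, p j = 1 := by
      rw [hp, ← Finset.sum_div]
      exact div_self (hZpos t htT).ne'
    have hkey := d2eal_hoeffding_finset (Λ t) p (ℓ t) (-η) hp0 hp1
      (fun j hj => hℓ t j hj)
    have hsum : (∑ j ∈ Λ t, p j * Real.exp (-η * ℓ t j))
        = (∑ j ∈ Λ t, Real.exp (-η * Lc (t+1) j)) / Z t := by
      rw [Finset.sum_div]
      apply Finset.sum_congr rfl
      intro j _
      rw [hp]
      rw [div_mul_eq_mul_div, ← Real.exp_add]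
      congr 2
      simp only [hLc, Finset.sum_range_succ]
      ring
    set W : ℝ := ∑ j ∈ Λ t, Real.exp (-η * Lc (t+1) j) with hW
    have hWZ : Z (t+1) ≤ W := by
      apply Finset.sum_le_sum_of_subset_of_nonneg (hsh t)
      exact fun j _ _ => (Real.exp_pos _).le
    have hWpos : 0 < W := lt_of_lt_of_le (hZpos (t+1) htT1) hWZ
    have hlogW : Real.log (Z (t+1)) ≤ Real.log W :=
      Real.log_le_log (hZpos (t+1) htT1) hWZ
    have hlogdiv : Real.log (W / Z t) = Real.log W - Real.log (Z t) :=
      Real.log_div hWpos.ne' (hZpos t htT).ne'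
    rw [hsum, hlogdiv] at hkey
    have hm : h t ≤ ∑ j ∈ Λ t, p j * ℓ t j := by
      have := hh t
      simpa [hp, hLc, hZ] using this
    have hdiv : ∑ j ∈ Λ t, p j * ℓ t j
        ≤ η / 8 + (Real.log (Z t) - Real.log (Z (t+1))) / η := by
      have h2 : (∑ j ∈ Λ t, p j * ℓ t j) * η
          ≤ η ^ 2 / 8 + (Real.log (Z t) - Real.log (Z (t+1))) := by
        nlinarith [hkey, hlogW]
      calc (∑ j ∈ Λ t, p j * ℓ t j)
          = (∑ j ∈ Λ t, p j * ℓ t j) * η / η := by field_simp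
        _ ≤ (η ^ 2 / 8 + (Real.log (Z t) - Real.log (Z (t+1)))) / η :=
            (div_le_div_iff_of_pos_right hη).mpr h2
        _ = η / 8 + (Real.log (Z t) - Real.log (Z (t+1))) / η := by
            field_simp
    exact le_trans hm hdiv
  have hsumbound : ∑ t ∈ Finset.range T, h t
      ≤ T * (η / 8) + (Real.log (Z 0) - Real.log (Z T)) / η := by
    calc ∑ t ∈ Finset.range T, h t
        ≤ ∑ t ∈ Finset.range T,
            (η / 8 + (Real.log (Z t) - Real.log (Z (t+1))) / η) :=
          Finset.sum_le_sum fun t ht => hstep t (Finset.mem_range.mp ht)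
      _ = T * (η / 8) + (Real.log (Z 0) - Real.log (Z T)) / η := by
          rw [Finset.sum_add_distrib, Finset.sum_const, ← Finset.sum_div,
            Finset.sum_range_sub' (fun t => Real.log (Z t))]
          simp [nsmul_eq_mul]
  have hZ0 : Z 0 = ((Λ 0).card : ℝ) := by
    simp [hZ, hLc]
  have hZT : -η * Lc T jstar ≤ Real.log (Z T) := by
    have h1 : Real.exp (-η * Lc T jstar) ≤ Z T :=
      Finset.single_le_sum (f := fun j => Real.exp (-η * Lc T j))
        (fun j _ => (Real.exp_pos _).le) hjstar
    calc -η * Lc T jstar = Real.log (Real.exp (-η * Lc T jstar)) :=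
          (Real.log_exp _).symm
      _ ≤ Real.log (Z T) := Real.log_le_log (Real.exp_pos _) h1
  have hfin : (Real.log (Z 0) - Real.log (Z T)) / η
      ≤ Real.log ((Λ 0).card) / η + Lc T jstar := by
    rw [hZ0]
    have h2 : Real.log ((Λ 0).card : ℝ) - Real.log (Z T)
        ≤ Real.log ((Λ 0).card : ℝ) + η * Lc T jstar := by linarith
    calc (Real.log ((Λ 0).card : ℝ) - Real.log (Z T)) / η
        ≤ (Real.log ((Λ 0).card : ℝ) + η * Lc T jstar) / η :=
          (div_le_div_iff_of_pos_right hη).mpr h2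
      _ = Real.log ((Λ 0).card : ℝ) / η + Lc T jstar := by
          field_simp
  calc ∑ t ∈ Finset.range T, h t
      ≤ T * (η / 8) + (Real.log (Z 0) - Real.log (Z T)) / η := hsumbound
    _ ≤ T * (η / 8) + (Real.log ((Λ 0).card) / η + Lc T jstar) := by linarith
    _ = (∑ s ∈ Finset.range T, ℓ s jstar) + η * T / 8
        + Real.log ((Λ 0).card) / η := by rw [hLc]; ring

end D2EALAux
/-- Corollary 3 of D2EAL: social prediction regret of agent i
with respect to the best expert. -/
theorem d2eal_social_regret_best_expert
    {n : ℕ} {Y : Type*} {N : ℕ}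
    (A : Set (EuclideanSpace ℝ (Fin n))) (hA : Convex ℝ A)
    (l : EuclideanSpace ℝ (Fin n) → Y → ℝ)
    (hl01 : ∀ x ∈ A, ∀ y : Y, l x y ∈ Set.Icc (0:ℝ) 1)
    (hconv : ∀ y : Y, ConvexOn ℝ A (fun x => l x y))
    -- Assumption 2: Lipschitz loss
    (L1 : ℝ) (hL1 : 0 ≤ L1)
    (hLip : ∀ (x1 x2 : EuclideanSpace ℝ (Fin n)) (y : Y),
      |l x1 y - l x2 y| ≤ L1 * ‖x1 - x2‖)
    (ηα ηw : ℝ) (hηα : 0 < ηα) (hηw : 0 < ηw) (T : ℕ) (hT : 1 ≤ T)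
    -- expert predictions and target sequence
    (f : ℕ → Fin N → EuclideanSpace ℝ (Fin n)) (y : ℕ → Y)
    (hfA : ∀ t j, f t j ∈ A)
    -- Assumption 3: pairwise expert prediction gaps
    (δ : ℕ → ℝ) (Δo : ℝ)
    (hδ : ∀ t, ∀ i j : Fin N, ‖f t i - f t j‖ ≤ δ t)
    (hΔo : (∑ t ∈ Finset.range T, δ (t+1)) ≤ Δo)
    -- Assumption 1: shrinking neighborhoods, each agent is its own neighbour
    (Λ : Fin N → ℕ → Finset (Fin N))
    (hΛself : ∀ i t, i ∈ Λ i t)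
    (hΛshrink : ∀ i t, Λ i (t+1) ⊆ Λ i t)
    -- experts' cumulative losses
    (L : ℕ → Fin N → ℝ)
    (hL : ∀ t j, L t j = ∑ s ∈ Finset.range t, l (f (s+1) j) (y (s+1)))
    -- each agent's social predictions and related cumulative losses
    (fhat : Fin N → ℕ → EuclideanSpace ℝ (Fin n))
    (hfhatA : ∀ j t, fhat j t ∈ A)
    (Lm : ℕ → Fin N → ℝ)
    (hLm : ∀ t j, Lm t j = ∑ s ∈ Finset.range t, l (fhat j s) (y (s+1)))
    -- first-layer exponential weights
    (α : ℕ → Fin N → ℝ)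
    (hα : ∀ t j, α t j =
      Real.exp (-ηα * L t j) / (Real.exp (-ηα * L t j) + Real.exp (-ηα * Lm t j)))
    -- individual predictions and their cumulative losses
    (barf : ℕ → Fin N → EuclideanSpace ℝ (Fin n))
    (hbarf : ∀ t j, barf (t+1) j = α t j • f (t+1) j + (1 - α t j) • fhat j t)
    (barL : ℕ → Fin N → ℝ)
    (hbarL : ∀ t j, barL t j = ∑ s ∈ Finset.range t, l (barf (s+1) j) (y (s+1)))
    -- second-layer (social) exponential weights and social prediction
    (w : Fin N → ℕ → Fin N → ℝ)
    (hw : ∀ i t j, w i t j =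
      Real.exp (-ηw * barL t j) / ∑ j' ∈ Λ i t, Real.exp (-ηw * barL t j'))
    (hfhat : ∀ i t, fhat i (t+1) = ∑ j ∈ Λ i t, w i t j • barf (t+1) j)
    -- agent i's social cumulative loss
    (i : Fin N)
    (hatL : ℕ → ℝ)
    (hhatL : ∀ t, hatL t = ∑ s ∈ Finset.range t, l (fhat i (s+1)) (y (s+1)))
    -- best expert
    (istar : Fin N) (histar : ∀ j : Fin N, L T istar ≤ L T j) :
    hatL T - L T istar
      ≤ ηw * T / 8 + Real.log ((Λ i 0).card) / ηw
        + ηα * T / 8 + Real.log 2 / ηα + L1 * Δo := by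

  -- losses of individual predictions, in [0,1]
  have hα01 : ∀ t j, α t j ∈ Set.Icc (0:ℝ) 1 := by
    intro t j
    rw [hα]
    constructor
    · positivity
    · rw [div_le_one (by positivity)]
      nlinarith [Real.exp_pos (-ηα * Lm t j)]
  have hbarfA : ∀ t j, barf (t+1) j ∈ A := by
    intro t j
    rw [hbarf]
    exact hA (hfA (t+1) j) (hfhatA j t) (hα01 t j).1
      (by linarith [(hα01 t j).2]) (by ring)
  -- Part B : social regret vs own individual prediction
  set ℓB : ℕ → Fin N → ℝ := fun t j => l (barf (t+1) j) (y (t+1)) with hℓB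
  have hℓBmem : ∀ t j, j ∈ Λ i t → ℓB t j ∈ Set.Icc (0:ℝ) 1 :=
    fun t j _ => hl01 _ (hbarfA t j) _
  have hℓBsum : ∀ t j, (∑ s ∈ Finset.range t, ℓB s j) = barL t j :=
    fun t j => (hbarL t j).symm
  have hhB : ∀ t, l (fhat i (t+1)) (y (t+1)) ≤ ∑ j ∈ Λ i t,
      (Real.exp (-ηw * ∑ s ∈ Finset.range t, ℓB s j)
        / ∑ j' ∈ Λ i t, Real.exp (-ηw * ∑ s ∈ Finset.range t, ℓB s j')) * ℓB t j := by
    intro t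
    have hZpos : 0 < ∑ j' ∈ Λ i t, Real.exp (-ηw * barL t j') :=
      Finset.sum_pos (fun j _ => Real.exp_pos _) ⟨i, hΛself i t⟩
    have hw0 : ∀ j ∈ Λ i t, 0 ≤ w i t j := by
      intro j _
      rw [hw]
      positivity
    have hw1 : ∑ j ∈ Λ i t, w i t j = 1 := by
      have : ∀ j ∈ Λ i t, w i t j
          = Real.exp (-ηw * barL t j) / ∑ j' ∈ Λ i t, Real.exp (-ηw * barL t j') :=
        fun j _ => hw i t j
      rw [Finset.sum_congr rfl this, ← Finset.sum_div]
      exact div_self hZpos.ne'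
    have hjen := (hconv (y (t+1))).map_sum_le hw0 hw1 (fun j _ => hbarfA t j)
    rw [← hfhat i t] at hjen
    calc l (fhat i (t+1)) (y (t+1))
        ≤ ∑ j ∈ Λ i t, w i t j • l (barf (t+1) j) (y (t+1)) := hjen
      _ = ∑ j ∈ Λ i t,
          (Real.exp (-ηw * ∑ s ∈ Finset.range t, ℓB s j)
            / ∑ j' ∈ Λ i t, Real.exp (-ηw * ∑ s ∈ Finset.range t, ℓB s j')) * ℓB t j := by
          apply Finset.sum_congr rfl
          intro j hj
          rw [smul_eq_mul, hw]
          simp only [hℓBsum]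
          rfl
  have hPartB := d2eal_ew_regret (Λ i) (hΛshrink i) ηw hηw ℓB hℓBmem
    (fun t => l (fhat i (t+1)) (y (t+1))) hhB T i (hΛself i T)
  rw [hℓBsum T i] at hPartB
  have hPartB' : hatL T ≤ barL T i + ηw * T / 8 + Real.log ((Λ i 0).card) / ηw := by
    rw [hhatL]
    exact hPartB
  -- Part A : individual regret vs expert i (two-expert exponential weights)
  set ℓA : ℕ → Bool → ℝ := fun t b =>
    if b then l (f (t+1) i) (y (t+1)) else l (fhat i t) (y (t+1)) with hℓA
  have hℓAmem : ∀ t (b : Bool), b ∈ (Finset.univ : Finset Bool) → ℓA t b ∈ Set.Icc (0:ℝ) 1 := by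
    intro t b _
    cases b
    · exact hl01 _ (hfhatA i t) _
    · exact hl01 _ (hfA (t+1) i) _
  have hℓAtrue : ∀ t, (∑ s ∈ Finset.range t, ℓA s true) = L t i := by
    intro t
    rw [hL]
    apply Finset.sum_congr rfl
    intro s _
    simp [hℓA]
  have hℓAfalse : ∀ t, (∑ s ∈ Finset.range t, ℓA s false) = Lm t i := by
    intro t
    rw [hLm]
    apply Finset.sum_congr rfl
    intro s _
    simp [hℓA]
  have hhA : ∀ t, l (barf (t+1) i) (y (t+1)) ≤ ∑ b ∈ (Finset.univ : Finset Bool),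
      (Real.exp (-ηα * ∑ s ∈ Finset.range t, ℓA s b)
        / ∑ b' ∈ (Finset.univ : Finset Bool),
            Real.exp (-ηα * ∑ s ∈ Finset.range t, ℓA s b')) * ℓA t b := by
    intro t
    have hden : (0:ℝ) < Real.exp (-ηα * L t i) + Real.exp (-ηα * Lm t i) := by positivity
    have h2 : Real.exp (-ηα * Lm t i)
        / (Real.exp (-ηα * L t i) + Real.exp (-ηα * Lm t i)) = 1 - α t i := by
      rw [hα]
      field_simp
      ring
    have ha0 : 0 ≤ α t i := (hα01 t i).1
    have hb0 : 0 ≤ 1 - α t i := by linarith [(hα01 t i).2]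
    have hab : α t i + (1 - α t i) = 1 := by ring
    have hcx := (hconv (y (t+1))).2 (hfA (t+1) i) (hfhatA i t) ha0 hb0 hab
    rw [← hbarf t i] at hcx
    simp only [Fintype.sum_bool, hℓAtrue, hℓAfalse]
    have hℓt : ℓA t true = l (f (t+1) i) (y (t+1)) := by simp [hℓA]
    have hℓf : ℓA t false = l (fhat i t) (y (t+1)) := by simp [hℓA]
    rw [hℓt, hℓf, ← hα t i, h2]
    simpa using hcx
  have hPartA := d2eal_ew_regret (fun _ => (Finset.univ : Finset Bool))
    (fun _ => Finset.Subset.refl _) ηα hηα ℓA hℓAmem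
    (fun t => l (barf (t+1) i) (y (t+1))) hhA T true (Finset.mem_univ _)
  rw [hℓAtrue T] at hPartA
  have hcard2 : ((Finset.univ : Finset Bool).card : ℝ) = 2 := by simp
  rw [hcard2] at hPartA
  have hPartA' : barL T i ≤ L T i + ηα * T / 8 + Real.log 2 / ηα := by
    rw [hbarL]
    exact hPartA
  -- Part C : expert i vs best expert, via Lipschitz continuity
  have hPartC : L T i - L T istar ≤ L1 * Δo := by
    rw [hL T i, hL T istar, ← Finset.sum_sub_distrib]
    calc (∑ s ∈ Finset.range T,
          (l (f (s+1) i) (y (s+1)) - l (f (s+1) istar) (y (s+1))))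
        ≤ ∑ s ∈ Finset.range T, L1 * δ (s+1) := by
          apply Finset.sum_le_sum
          intro s _
          calc l (f (s+1) i) (y (s+1)) - l (f (s+1) istar) (y (s+1))
              ≤ |l (f (s+1) i) (y (s+1)) - l (f (s+1) istar) (y (s+1))| := le_abs_self _
            _ ≤ L1 * ‖f (s+1) i - f (s+1) istar‖ := hLip _ _ _
            _ ≤ L1 * δ (s+1) := mul_le_mul_of_nonneg_left (hδ (s+1) i istar) hL1
      _ = L1 * ∑ s ∈ Finset.range T, δ (s+1) := by rw [Finset.mul_sum]
      _ ≤ L1 * Δo := mul_le_mul_of_nonneg_left hΔo hL1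
  linarith
end

section
/- Under Assumptions 1-4 (where Assumption 4 states the best expert's cumulative loss satisfies L_{T,i*} ≤ c_0 T^{1-α} for some α ∈ (0,1]), the D2EAL social prediction global regret satisfies \hat{L}_{T,i} - \bar{L}_{T,j*} ≤ η_w T/8 + (log d_i(0))/η_w + η_α T/8 + (log 2)/η_α + L1·Δ_o + c_0 T^{1-α}, where j* = argmin_{j∈[N]} \bar{L}_{T,j}. -/
section HoeffAux
open Real Finset

lemma hoeff_key (p s : ℝ) (hp0 : 0 ≤ p) (hp1 : p ≤ 1) :
    1 - p + p * Real.exp s ≤ Real.exp (p * s + s ^ 2 / 8) := by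
  set H : ℝ → ℝ := fun t => 1 - p + p * Real.exp t with hHdef
  have hHpos : ∀ t, 0 < H t := by
    intro t
    rcases eq_or_lt_of_le hp0 with h | h
    · simp [hHdef, ← h]
    · have := Real.exp_pos t
      have h1p : 0 ≤ 1 - p := by linarith
      have : 0 < p * Real.exp t := by positivity
      simp only [hHdef]; linarith
  set g : ℝ → ℝ := fun t => p * t + t ^ 2 / 8 - Real.log (H t) with hgdef
  set D1 : ℝ → ℝ := fun t => p + t / 4 - p * Real.exp t / H t with hD1def
  have hH : ∀ t, HasDerivAt H (p * Real.exp t) t := by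
    intro t
    exact ((Real.hasDerivAt_exp t).const_mul p).const_add (1 - p)
  have hg : ∀ t, HasDerivAt g (D1 t) t := by
    intro t
    have h1 : HasDerivAt (fun x : ℝ => p * x) (p * 1) t := (hasDerivAt_id t).const_mul p
    have h2 : HasDerivAt (fun x : ℝ => x ^ 2 / 8) ((2 * t ^ 1) / 8) t :=
      (hasDerivAt_pow 2 t).div_const 8
    have h3 : HasDerivAt (fun x => Real.log (H x)) (p * Real.exp t / H t) t :=
      (hH t).log (ne_of_gt (hHpos t))
    have := ((h1.add h2).sub h3)
    have hD : D1 t = p * 1 + 2 * t ^ 1 / 8 - p * Real.exp t / H t := by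
      simp only [hD1def]; ring
    rw [hD]; exact this
  have hD1 : ∀ t, HasDerivAt D1 (1 / 4 - (1 - p) * (p * Real.exp t) / (H t) ^ 2) t := by
    intro t
    have h1 : HasDerivAt (fun x : ℝ => p + x / 4) (0 + 1 / 4) t :=
      (hasDerivAt_const t p).add ((hasDerivAt_id t).div_const 4)
    have h2 : HasDerivAt (fun x => p * Real.exp x / H x)
        ((p * Real.exp t * H t - p * Real.exp t * (p * Real.exp t)) / (H t) ^ 2) t :=
      ((Real.hasDerivAt_exp t).const_mul p).div (hH t) (ne_of_gt (hHpos t))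
    have := h1.sub h2
    have hD : 1 / 4 - (1 - p) * (p * Real.exp t) / (H t) ^ 2 = 0 + 1 / 4 -
        (p * Real.exp t * H t - p * Real.exp t * (p * Real.exp t)) / (H t) ^ 2 := by
      simp only [hHdef]
      ring
    rw [hD]; exact this
  have hD1mono : Monotone D1 := by
    have hdiff : ∀ t, DifferentiableAt ℝ D1 t := fun t => (hD1 t).differentiableAt
    apply monotone_of_deriv_nonneg (fun t => hdiff t)
    intro t
    rw [(hD1 t).deriv]
    have hE := Real.exp_pos t
    have hsq : 0 < (H t) ^ 2 := pow_pos (hHpos t) 2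
    rw [sub_nonneg, div_le_iff₀ hsq]
    have : H t = 1 - p + p * Real.exp t := rfl
    nlinarith [sq_nonneg (1 - p - p * Real.exp t)]
  have hD10 : D1 0 = 0 := by
    simp only [hD1def, hHdef, Real.exp_zero, mul_one]
    have : 1 - p + p = 1 := by ring
    rw [this]
    norm_num
  have hg0 : g 0 = 0 := by
    simp only [hgdef, hHdef, Real.exp_zero, mul_one, mul_zero]
    have : 1 - p + p = 1 := by ring
    rw [this]
    norm_num
  have hgnonneg : ∀ t, 0 ≤ g t := by
    intro t
    have hgc : Continuous g := by
      have : Differentiable ℝ g := fun x => (hg x).differentiableAt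
      exact this.continuous
    rcases le_or_gt 0 t with h | h
    · have hmono : MonotoneOn g (Set.Ici (0:ℝ)) := by
        apply monotoneOn_of_deriv_nonneg (convex_Ici 0) hgc.continuousOn
        · intro x _; exact (hg x).differentiableAt.differentiableWithinAt
        · intro x hx
          rw [(hg x).deriv]
          rw [interior_Ici] at hx
          have := hD1mono (le_of_lt hx)
          rw [hD10] at this; exact this
      have := hmono Set.self_mem_Ici (Set.mem_Ici.mpr h) h
      linarith [hg0 ▸ this]
    · have hanti : AntitoneOn g (Set.Iic (0:ℝ)) := by
        apply antitoneOn_of_deriv_nonpos (convex_Iic 0) hgc.continuousOn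
        · intro x _; exact (hg x).differentiableAt.differentiableWithinAt
        · intro x hx
          rw [(hg x).deriv]
          rw [interior_Iic] at hx
          have := hD1mono (le_of_lt hx)
          rw [hD10] at this; exact this
      have := hanti (Set.mem_Iic.mpr (le_of_lt h)) Set.self_mem_Iic (le_of_lt h)
      linarith [hg0 ▸ this]
  have hlog : Real.log (H s) ≤ p * s + s ^ 2 / 8 := by
    have := hgnonneg s
    simp only [hgdef] at this
    linarith
  exact (Real.log_le_iff_le_exp (hHpos s)).mp hlog

lemma hoeff_step {ι : Type*} (S : Finset ι) (p ℓ : ι → ℝ) (η : ℝ) (hη : 0 < η)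
    (hp0 : ∀ j ∈ S, 0 ≤ p j) (hp1 : ∑ j ∈ S, p j = 1)
    (hℓ : ∀ j ∈ S, ℓ j ∈ Set.Icc (0:ℝ) 1) :
    ∑ j ∈ S, p j * ℓ j
      ≤ η / 8 - (1 / η) * Real.log (∑ j ∈ S, p j * Real.exp (-η * ℓ j)) := by
  set m : ℝ := ∑ j ∈ S, p j * ℓ j with hm
  have hm0 : 0 ≤ m := Finset.sum_nonneg fun j hj => mul_nonneg (hp0 j hj) (hℓ j hj).1
  have hm1 : m ≤ 1 := by
    calc m ≤ ∑ j ∈ S, p j := Finset.sum_le_sum fun j hj =>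
            mul_le_of_le_one_right (hp0 j hj) (hℓ j hj).2
    _ = 1 := hp1
  set X : ℝ := ∑ j ∈ S, p j * Real.exp (-η * ℓ j) with hX
  have hXpos : 0 < X := by
    have h1 : Real.exp (-η) ≤ X := by
      calc Real.exp (-η) = ∑ j ∈ S, p j * Real.exp (-η) := by
              rw [← Finset.sum_mul, hp1, one_mul]
        _ ≤ X := Finset.sum_le_sum fun j hj => by
              have := Real.exp_le_exp.mpr (by nlinarith [(hℓ j hj).2] :
                (-η : ℝ) ≤ -η * ℓ j)
              exact mul_le_mul_of_nonneg_left this (hp0 j hj)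
    linarith [Real.exp_pos (-η)]
  have hXle : X ≤ Real.exp (m * (-η) + (-η) ^ 2 / 8) := by
    have step1 : X ≤ 1 - m + m * Real.exp (-η) := by
      have hconv : ∀ j ∈ S, Real.exp (-η * ℓ j)
          ≤ (1 - ℓ j) + ℓ j * Real.exp (-η) := by
        intro j hj
        have h0 : (0:ℝ) ≤ 1 - ℓ j := by linarith [(hℓ j hj).2]
        have h1 : (0:ℝ) ≤ ℓ j := (hℓ j hj).1
        have := convexOn_exp.2 (Set.mem_univ (0:ℝ)) (Set.mem_univ (-η)) h0 h1
          (by ring)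
        simpa [Real.exp_zero, mul_comm] using this
      calc X ≤ ∑ j ∈ S, p j * ((1 - ℓ j) + ℓ j * Real.exp (-η)) :=
            Finset.sum_le_sum fun j hj =>
              mul_le_mul_of_nonneg_left (hconv j hj) (hp0 j hj)
        _ = 1 - m + m * Real.exp (-η) := by
            simp only [mul_add, mul_sub, mul_one, Finset.sum_add_distrib,
              Finset.sum_sub_distrib, hp1, ← Finset.sum_mul]
            rw [hm, Finset.sum_mul]
            congr 1
            exact Finset.sum_congr rfl fun j _ => by ring
    calc X ≤ 1 - m + m * Real.exp (-η) := step1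
      _ ≤ Real.exp (m * (-η) + (-η) ^ 2 / 8) := hoeff_key m (-η) hm0 hm1
  have hlog : Real.log X ≤ m * (-η) + (-η) ^ 2 / 8 :=
    (Real.log_le_iff_le_exp hXpos).mpr hXle
  have hdiv : (1 / η) * Real.log X ≤ (1 / η) * (m * (-η) + (-η) ^ 2 / 8) :=
    mul_le_mul_of_nonneg_left hlog (by positivity)
  have : (1 / η) * (m * (-η) + (-η) ^ 2 / 8) = -m + η / 8 := by
    field_simp
  linarith [this ▸ hdiv]

end HoeffAux


/-- Theorem 2 of D2EAL: social prediction global regret bound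
under Assumptions 1-4. -/
theorem d2eal_social_global_regret
    {n : ℕ} {Y : Type*} {N : ℕ}
    (A : Set (EuclideanSpace ℝ (Fin n))) (hA : Convex ℝ A)
    (l : EuclideanSpace ℝ (Fin n) → Y → ℝ)
    (hl01 : ∀ x ∈ A, ∀ y : Y, l x y ∈ Set.Icc (0:ℝ) 1)
    (hconv : ∀ y : Y, ConvexOn ℝ A (fun x => l x y))
    -- Assumption 2: Lipschitz loss
    (L1 : ℝ) (hL1 : 0 ≤ L1)
    (hLip : ∀ (x1 x2 : EuclideanSpace ℝ (Fin n)) (y : Y),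
      |l x1 y - l x2 y| ≤ L1 * ‖x1 - x2‖)
    (ηα ηw : ℝ) (hηα : 0 < ηα) (hηw : 0 < ηw) (T : ℕ) (hT : 1 ≤ T)
    -- expert predictions and target sequence
    (f : ℕ → Fin N → EuclideanSpace ℝ (Fin n)) (y : ℕ → Y)
    (hfA : ∀ t j, f t j ∈ A)
    -- Assumption 3: pairwise expert prediction gaps
    (δ : ℕ → ℝ) (Δo : ℝ)
    (hδ : ∀ t, ∀ i j : Fin N, ‖f t i - f t j‖ ≤ δ t)
    (hΔo : (∑ t ∈ Finset.range T, δ (t+1)) ≤ Δo)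
    -- Assumption 1: shrinking neighborhoods, each agent is its own neighbour
    (Λ : Fin N → ℕ → Finset (Fin N))
    (hΛself : ∀ i t, i ∈ Λ i t)
    (hΛshrink : ∀ i t, Λ i (t+1) ⊆ Λ i t)
    -- experts' cumulative losses
    (L : ℕ → Fin N → ℝ)
    (hL : ∀ t j, L t j = ∑ s ∈ Finset.range t, l (f (s+1) j) (y (s+1)))
    -- each agent's social predictions and related cumulative losses
    (fhat : Fin N → ℕ → EuclideanSpace ℝ (Fin n))
    (hfhatA : ∀ j t, fhat j t ∈ A)
    (Lm : ℕ → Fin N → ℝ)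
    (hLm : ∀ t j, Lm t j = ∑ s ∈ Finset.range t, l (fhat j s) (y (s+1)))
    -- first-layer exponential weights
    (α : ℕ → Fin N → ℝ)
    (hα : ∀ t j, α t j =
      Real.exp (-ηα * L t j) / (Real.exp (-ηα * L t j) + Real.exp (-ηα * Lm t j)))
    -- individual predictions and their cumulative losses
    (barf : ℕ → Fin N → EuclideanSpace ℝ (Fin n))
    (hbarf : ∀ t j, barf (t+1) j = α t j • f (t+1) j + (1 - α t j) • fhat j t)
    (barL : ℕ → Fin N → ℝ)
    (hbarL : ∀ t j, barL t j = ∑ s ∈ Finset.range t, l (barf (s+1) j) (y (s+1)))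
    -- second-layer (social) exponential weights and social prediction
    (w : Fin N → ℕ → Fin N → ℝ)
    (hw : ∀ i t j, w i t j =
      Real.exp (-ηw * barL t j) / ∑ j' ∈ Λ i t, Real.exp (-ηw * barL t j'))
    (hfhat : ∀ i t, fhat i (t+1) = ∑ j ∈ Λ i t, w i t j • barf (t+1) j)
    -- agent i's social cumulative loss
    (i : Fin N)
    (hatL : ℕ → ℝ)
    (hhatL : ∀ t, hatL t = ∑ s ∈ Finset.range t, l (fhat i (s+1)) (y (s+1)))
    -- best expert and Assumption 4: sub-linear best expert cumulative loss
    (istar : Fin N) (histar : ∀ j : Fin N, L T istar ≤ L T j)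
    (c0 a : ℝ) (hc0 : 0 ≤ c0) (ha : a ∈ Set.Ioc (0:ℝ) 1)
    (hsublin : L T istar ≤ c0 * (T : ℝ) ^ (1 - a))
    -- best individual prediction in the network
    (jstar : Fin N) (hjstar : ∀ j : Fin N, barL T jstar ≤ barL T j) :
    hatL T - barL T jstar
      ≤ ηw * T / 8 + Real.log ((Λ i 0).card) / ηw
        + ηα * T / 8 + Real.log 2 / ηα + L1 * Δo + c0 * (T : ℝ) ^ (1 - a) := by
  -- basic facts about α
  have hα0 : ∀ t j, 0 ≤ α t j := by
    intro t j; rw [hα]; positivity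
  have hα1 : ∀ t j, α t j ≤ 1 := by
    intro t j; rw [hα, div_le_one (by positivity)]
    linarith [Real.exp_pos (-ηα * Lm t j)]
  -- barf lands in A
  have hbarfA : ∀ t j, barf (t+1) j ∈ A := by
    intro t j
    rw [hbarf]
    exact hA (hfA (t+1) j) (hfhatA j t) (hα0 t j) (by linarith [hα1 t j]) (by ring)
  -- successor formulas
  have hbarLsucc : ∀ t j, barL (t+1) j = barL t j + l (barf (t+1) j) (y (t+1)) := by
    intro t j; rw [hbarL, hbarL, Finset.sum_range_succ]
  have hLsucc : ∀ t j, L (t+1) j = L t j + l (f (t+1) j) (y (t+1)) := by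
    intro t j; rw [hL, hL, Finset.sum_range_succ]
  have hLmsucc : ∀ t j, Lm (t+1) j = Lm t j + l (fhat j t) (y (t+1)) := by
    intro t j; rw [hLm, hLm, Finset.sum_range_succ]
  have hhatLsucc : ∀ t, hatL (t+1) = hatL t + l (fhat i (t+1)) (y (t+1)) := by
    intro t; rw [hhatL, hhatL, Finset.sum_range_succ]
  -- second-layer potential
  set W : ℕ → ℝ := fun t => ∑ j' ∈ Λ i t, Real.exp (-ηw * barL t j') with hWdef
  have hWpos : ∀ t, 0 < W t := fun t =>
    Finset.sum_pos (fun j _ => Real.exp_pos _) ⟨i, hΛself i t⟩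
  have hw' : ∀ t j, w i t j = Real.exp (-ηw * barL t j) / W t := fun t j => hw i t j
  have hw0 : ∀ t j, 0 ≤ w i t j := by
    intro t j; rw [hw']; positivity
  have hwsum : ∀ t, ∑ j ∈ Λ i t, w i t j = 1 := by
    intro t
    have h1 : ∑ j ∈ Λ i t, w i t j = W t / W t := by
      rw [hWdef]
      simp only [Finset.sum_div]
      exact Finset.sum_congr rfl fun j hj => hw' t j
    rw [h1, div_self (ne_of_gt (hWpos t))]
  -- layer 2 telescoping
  have claim2 : ∀ t : ℕ, hatL t
      ≤ ηw * t / 8 + (1/ηw) * Real.log (W 0) - (1/ηw) * Real.log (W t) := by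
    intro t
    induction t with
    | zero => rw [hhatL]; simp
    | succ t ih =>
      set ℓ : Fin N → ℝ := fun j => l (barf (t+1) j) (y (t+1)) with hℓdef
      have hℓIcc : ∀ j ∈ Λ i t, ℓ j ∈ Set.Icc (0:ℝ) 1 := fun j _ =>
        hl01 _ (hbarfA t j) _
      have step1 : l (fhat i (t+1)) (y (t+1)) ≤ ∑ j ∈ Λ i t, w i t j * ℓ j := by
        rw [hfhat i t]
        have := (hconv (y (t+1))).map_sum_le (fun j _ => hw0 t j) (hwsum t)
          (fun j _ => hbarfA t j)
        simpa [smul_eq_mul, hℓdef] using this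
      have step2 : ∑ j ∈ Λ i t, w i t j * ℓ j
          ≤ ηw/8 - (1/ηw) * Real.log (∑ j ∈ Λ i t, w i t j * Real.exp (-ηw * ℓ j)) :=
        hoeff_step (Λ i t) (w i t) ℓ ηw hηw (fun j _ => hw0 t j) (hwsum t) hℓIcc
      set S' : ℝ := ∑ j ∈ Λ i t, Real.exp (-ηw * barL (t+1) j) with hS'def
      have hS'pos : 0 < S' :=
        Finset.sum_pos (fun j _ => Real.exp_pos _) ⟨i, hΛself i t⟩
      have hinner : ∑ j ∈ Λ i t, w i t j * Real.exp (-ηw * ℓ j) = S' / W t := by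
        rw [hS'def]
        simp only [Finset.sum_div]
        refine Finset.sum_congr rfl fun j hj => ?_
        have hexp1 : Real.exp (-ηw * barL (t+1) j)
            = Real.exp (-ηw * barL t j) * Real.exp (-ηw * ℓ j) := by
          rw [hbarLsucc, ← Real.exp_add]
          congr 1
          simp only [hℓdef]
          ring
        rw [hw', hexp1]
        ring
      rw [hinner, Real.log_div (ne_of_gt hS'pos) (ne_of_gt (hWpos t)), mul_sub] at step2
      have hsub : W (t+1) ≤ S' := by
        rw [hWdef, hS'def]
        exact Finset.sum_le_sum_of_subset_of_nonneg (hΛshrink i t)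
          (fun j _ _ => (Real.exp_pos _).le)
      have hlogmono : Real.log (W (t+1)) ≤ Real.log S' :=
        Real.log_le_log (hWpos (t+1)) hsub
      have hmul : (1/ηw) * Real.log (W (t+1)) ≤ (1/ηw) * Real.log S' :=
        mul_le_mul_of_nonneg_left hlogmono (by positivity)
      have hstep := hhatLsucc t
      push_cast
      push_cast at ih
      linarith
  -- first-layer potential for agent i
  set V : ℕ → ℝ := fun t => Real.exp (-ηα * L t i) + Real.exp (-ηα * Lm t i) with hVdef
  have hVpos : ∀ t, 0 < V t := fun t => by positivity
  have hα' : ∀ t, α t i = Real.exp (-ηα * L t i) / V t := fun t => hα t i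
  have claim1 : ∀ t : ℕ, barL t i
      ≤ ηα * t / 8 + (1/ηα) * Real.log (V 0) - (1/ηα) * Real.log (V t) := by
    intro t
    induction t with
    | zero => rw [hbarL]; simp
    | succ t ih =>
      set ℓ1 : ℝ := l (f (t+1) i) (y (t+1)) with hℓ1def
      set ℓ2 : ℝ := l (fhat i t) (y (t+1)) with hℓ2def
      have hℓ1Icc : ℓ1 ∈ Set.Icc (0:ℝ) 1 := hl01 _ (hfA _ _) _
      have hℓ2Icc : ℓ2 ∈ Set.Icc (0:ℝ) 1 := hl01 _ (hfhatA _ _) _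
      have step1 : l (barf (t+1) i) (y (t+1)) ≤ α t i * ℓ1 + (1 - α t i) * ℓ2 := by
        rw [hbarf]
        have := (hconv (y (t+1))).2 (hfA (t+1) i) (hfhatA i t) (hα0 t i)
          (by linarith [hα1 t i] : (0:ℝ) ≤ 1 - α t i) (by ring)
        simpa [smul_eq_mul] using this
      have step2 : α t i * ℓ1 + (1 - α t i) * ℓ2
          ≤ ηα/8 - (1/ηα) * Real.log
            (α t i * Real.exp (-ηα * ℓ1) + (1 - α t i) * Real.exp (-ηα * ℓ2)) := by
        have := hoeff_step (Finset.univ : Finset Bool)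
          (fun b => if b then α t i else 1 - α t i)
          (fun b => if b then ℓ1 else ℓ2) ηα hηα
          (fun b _ => by cases b <;> simp <;> [linarith [hα1 t i]; exact hα0 t i])
          (by simp [Fintype.sum_bool])
          (fun b _ => by cases b <;> simpa)
        simpa [Fintype.sum_bool] using this
      have hinner : α t i * Real.exp (-ηα * ℓ1) + (1 - α t i) * Real.exp (-ηα * ℓ2)
          = V (t+1) / V t := by
        have h1α : 1 - α t i = Real.exp (-ηα * Lm t i) / V t := by
          rw [hα']
          rw [hVdef]
          field_simp
          ring
        have hexp1 : Real.exp (-ηα * L (t+1) i)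
            = Real.exp (-ηα * L t i) * Real.exp (-ηα * ℓ1) := by
          rw [hLsucc, ← Real.exp_add]; congr 1; rw [hℓ1def]; ring
        have hexp2 : Real.exp (-ηα * Lm (t+1) i)
            = Real.exp (-ηα * Lm t i) * Real.exp (-ηα * ℓ2) := by
          rw [hLmsucc, ← Real.exp_add]; congr 1; rw [hℓ2def]; ring
        rw [h1α, hα']
        show _ = (Real.exp (-ηα * L (t+1) i) + Real.exp (-ηα * Lm (t+1) i)) / V t
        rw [hexp1, hexp2]
        ring
      rw [hinner, Real.log_div (ne_of_gt (hVpos (t+1))) (ne_of_gt (hVpos t)),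
        mul_sub] at step2
      have hstep := hbarLsucc t i
      push_cast
      push_cast at ih
      linarith
  -- endgame values
  have hW0 : W 0 = ((Λ i 0).card : ℝ) := by
    have hb0 : ∀ j, barL 0 j = 0 := fun j => by rw [hbarL]; simp
    simp only [hWdef, hb0, mul_zero, neg_zero, Real.exp_zero]
    simp
  have hV0 : V 0 = 2 := by
    have h1 : L 0 i = 0 := by rw [hL]; simp
    have h2 : Lm 0 i = 0 := by rw [hLm]; simp
    simp only [hVdef, h1, h2, mul_zero, neg_zero, Real.exp_zero]
    norm_num
  have hWT : Real.exp (-ηw * barL T i) ≤ W T := by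
    simp only [hWdef]
    exact Finset.single_le_sum (f := fun j => Real.exp (-ηw * barL T j)) (fun j _ => (Real.exp_pos _).le) (hΛself i T)
  have hWTlog : -(ηw * barL T i) ≤ Real.log (W T) := by
    have : Real.log (Real.exp (-ηw * barL T i)) ≤ Real.log (W T) :=
      Real.log_le_log (Real.exp_pos _) hWT
    rw [Real.log_exp] at this
    linarith
  have hVT : Real.exp (-ηα * L T i) ≤ V T := by
    simp only [hVdef]
    exact le_add_of_nonneg_right (Real.exp_pos _).le
  have hVTlog : -(ηα * L T i) ≤ Real.log (V T) := by
    have : Real.log (Real.exp (-ηα * L T i)) ≤ Real.log (V T) :=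
      Real.log_le_log (Real.exp_pos _) hVT
    rw [Real.log_exp] at this
    linarith
  -- convert potentials into regret bounds
  have e1 : (1/ηw) * Real.log (W 0) = Real.log ((Λ i 0).card) / ηw := by
    rw [hW0]; ring
  have e2 : -((1/ηw) * Real.log (W T)) ≤ barL T i := by
    have h := mul_le_mul_of_nonneg_left hWTlog (by positivity : (0:ℝ) ≤ 1/ηw)
    have h2 : (1/ηw) * -(ηw * barL T i) = -(barL T i) := by
      field_simp
    linarith
  have e3 : (1/ηα) * Real.log (V 0) = Real.log 2 / ηα := by
    rw [hV0]; ring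
  have e4 : -((1/ηα) * Real.log (V T)) ≤ L T i := by
    have h := mul_le_mul_of_nonneg_left hVTlog (by positivity : (0:ℝ) ≤ 1/ηα)
    have h2 : (1/ηα) * -(ηα * L T i) = -(L T i) := by
      field_simp
    linarith
  -- Lipschitz comparison with the best expert
  have hLip2 : L T i ≤ L T istar + L1 * Δo := by
    have h : ∀ s, l (f (s+1) i) (y (s+1)) ≤ l (f (s+1) istar) (y (s+1)) + L1 * δ (s+1) := by
      intro s
      have h1 := hLip (f (s+1) i) (f (s+1) istar) (y (s+1))
      have h2 := hδ (s+1) i istar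
      have h3 : L1 * ‖f (s+1) i - f (s+1) istar‖ ≤ L1 * δ (s+1) :=
        mul_le_mul_of_nonneg_left h2 hL1
      have h4 := le_abs_self (l (f (s+1) i) (y (s+1)) - l (f (s+1) istar) (y (s+1)))
      linarith
    rw [hL T i]
    calc ∑ s ∈ Finset.range T, l (f (s+1) i) (y (s+1))
        ≤ ∑ s ∈ Finset.range T, (l (f (s+1) istar) (y (s+1)) + L1 * δ (s+1)) :=
          Finset.sum_le_sum (fun s _ => h s)
      _ = L T istar + L1 * ∑ s ∈ Finset.range T, δ (s+1) := by
          rw [Finset.sum_add_distrib, ← hL, ← Finset.mul_sum]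
      _ ≤ L T istar + L1 * Δo := by
          have := mul_le_mul_of_nonneg_left hΔo hL1
          linarith
  -- nonnegativity of the best individual cumulative loss
  have hbarnn : 0 ≤ barL T jstar := by
    rw [hbarL]
    exact Finset.sum_nonneg fun s _ => (hl01 _ (hbarfA s jstar) _).1
  have hc2 := claim2 T
  have hc1 := claim1 T
  linarith
end
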